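/- For all real numbers a, k, x with 0 < a < 1, k > 0 and a < x < 1: a^{k+1}·(ln a)·(x^k − 1) − (a^{k+1} − 1)·x^k·(ln x) < 0. -/
import Mathlib

/-- Monotonicity core: for `0 < A < X < 1`,
`A·(1−X)·(−ln A) < X·(1−A)·(−ln X)`. -/
lemma aux_log_ineq {A X : ℝ} (hA0 : 0 < A) (hAX : A < X) (hX1 : X < 1) :
    A * (1 - X) * (-Real.log A) < X * (1 - A) * (-Real.log X) := by
  have hX0 : 0 < X := lt_trans hA0 hAX
  have h1 : Real.log (X / A) < X / A - 1 :=
    Real.log_lt_sub_one_of_pos (div_pos hX0 hA0) (by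
      intro h
      have : X = A := by field_simp at h; linarith
      linarith)
  have hlog : Real.log (X / A) = Real.log X - Real.log A :=
    Real.log_div (ne_of_gt hX0) (ne_of_gt hA0)
  have hXA : X / A - 1 = (X - A) / A := by field_simp
  rw [hlog, hXA] at h1
  have h1' : A * (Real.log X - Real.log A) < X - A := by
    have := mul_lt_mul_of_pos_left h1 hA0
    rwa [mul_div_cancel₀ _ (ne_of_gt hA0)] at this
  have h2 : Real.log X ≤ X - 1 := Real.log_le_sub_one_of_pos hX0
  have f1 := mul_lt_mul_of_pos_left h1' (sub_pos.mpr hX1)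
  have f2 := mul_le_mul_of_nonneg_left h2 (le_of_lt (sub_pos.mpr hAX))
  nlinarith [f1, f2]

theorem claim_two_inequality (a k x : ℝ) (ha0 : 0 < a) (ha1 : a < 1) (hk : 0 < k)
    (hax : a < x) (hx1 : x < 1) :
    a ^ (k + 1) * Real.log a * (x ^ k - 1) - (a ^ (k + 1) - 1) * x ^ k * Real.log x < 0 := by
  have hx0 : 0 < x := lt_trans ha0 hax
  set A := a ^ (k + 1) with hA
  set X := x ^ k with hX
  have hA0 : 0 < A := Real.rpow_pos_of_pos ha0 _
  have hX0 : 0 < X := Real.rpow_pos_of_pos hx0 _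
  have hA1 : A < 1 := Real.rpow_lt_one ha0.le ha1 (by linarith)
  have hX1 : X < 1 := Real.rpow_lt_one hx0.le hx1 hk
  have hAX : A < X := by
    calc A < x ^ (k + 1) := Real.rpow_lt_rpow ha0.le hax (by linarith)
    _ ≤ X := Real.rpow_le_rpow_of_exponent_ge hx0 hx1.le (by linarith)
  have hlogA : Real.log A = (k + 1) * Real.log a := Real.log_rpow ha0 _
  have hlogX : Real.log X = k * Real.log x := Real.log_rpow hx0 _
  have hla : Real.log a = Real.log A / (k + 1) := by rw [hlogA]; field_simp
  have hlx : Real.log x = Real.log X / k := by rw [hlogX]; field_simp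
  rw [hla, hlx]
  have hlA : Real.log A < 0 := Real.log_neg hA0 hA1
  have hlX : Real.log X < 0 := Real.log_neg hX0 hX1
  have key : A * (1 - X) * (-Real.log A) < X * (1 - A) * (-Real.log X) :=
    aux_log_ineq hA0 hAX hX1
  have hT1 : 0 < A * (1 - X) * (-Real.log A) :=
    mul_pos (mul_pos hA0 (sub_pos.mpr hX1)) (neg_pos.mpr hlA)
  have e1 : A * (Real.log A / (k + 1)) * (X - 1)
      = A * (1 - X) * (-Real.log A) / (k + 1) := by ring
  have e2 : (A - 1) * X * (Real.log X / k)
      = X * (1 - A) * (-Real.log X) / k := by ring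
  rw [e1, e2]
  have c1 : A * (1 - X) * (-Real.log A) / (k + 1) ≤ A * (1 - X) * (-Real.log A) / k :=
    div_le_div_of_nonneg_left hT1.le hk (by linarith)
  have c2 : A * (1 - X) * (-Real.log A) / k < X * (1 - A) * (-Real.log X) / k :=
    (div_lt_div_iff_of_pos_right hk).mpr key
  linarith
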